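/- For the 0/1 loss, the robust surrogate has a closed form: for a point z₀ with label y₀ and classifier h, sup over z of (1[h(z) ≠ y₀] − γ·‖z − z₀‖²) equals max(0, 1 − γ·d²), where d = inf{‖z − z₀‖ : h(z) ≠ y₀} is the distance to the nearest misclassified point (assuming the infimum is attained). -/
import Mathlib


/-- closed form of the robust surrogate for the 0/1 loss. -/
theorem stmt_0 {E Y : Type*} [NormedAddCommGroup E] [DecidableEq Y] (h : E → Y) (y₀ : Y) (z₀ : E)
    (γ : ℝ) (hγ : 0 ≤ γ) (zadv : E) (hadv : h zadv ≠ y₀) (d : ℝ)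
    (hd : d = ‖zadv - z₀‖)
    (hinf : IsGLB {r : ℝ | ∃ z : E, h z ≠ y₀ ∧ r = ‖z - z₀‖} d) :
    IsLUB {v : ℝ | ∃ z : E, v = (if h z ≠ y₀ then (1 : ℝ) else 0) - γ * ‖z - z₀‖ ^ 2}
      (max 0 (1 - γ * d ^ 2)) := by
  have hd0 : 0 ≤ d := hd ▸ norm_nonneg _
  constructor
  · rintro v ⟨z, rfl⟩
    by_cases hz : h z ≠ y₀
    · rw [if_pos hz]
      refine le_max_of_le_right ?_
      have hle : d ≤ ‖z - z₀‖ := hinf.1 ⟨z, hz, rfl⟩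
      have : d ^ 2 ≤ ‖z - z₀‖ ^ 2 := by
        apply pow_le_pow_left₀ hd0 hle
      nlinarith
    · simp only [hz, if_neg, not_false_iff]
      refine le_max_of_le_left ?_
      have := sq_nonneg ‖z - z₀‖
      nlinarith
  · intro b hb
    have h1 : (0 : ℝ) ≤ b := by
      have := hb ⟨z₀, rfl⟩
      have hn : ‖z₀ - z₀‖ = 0 := by simp
      by_cases hz : h z₀ ≠ y₀ <;> simp [hz, hn] at this <;> linarith
    have h2 : 1 - γ * d ^ 2 ≤ b := by
      have := hb ⟨zadv, rfl⟩
      rw [if_pos hadv] at this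
      rw [hd]; exact this
    exact max_le h1 h2
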